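/- Let m, n ≥ 1. The set S_{m,n} of bipartite separable states is a convex subset of the real vector space of mn×mn complex Hermitian matrices, and its set of extreme points is exactly the set of pure product states {P ⊗ Q : P ∈ P_m, Q ∈ P_n}, where ⊗ denotes the Kronecker product. -/

import Mathlib

open Matrix Kronecker ComplexOrder

/-- A pure state: a rank-one Hermitian matrix of trace one. -/
def IsPureState {m : ℕ} (A : Matrix (Fin m) (Fin m) ℂ) : Prop :=
  A.IsHermitian ∧ A.rank = 1 ∧ A.trace = 1

/-- A density matrix: a positive semidefinite (Hermitian) matrix of trace one. -/
def IsDensityMatrix {m : ℕ} (A : Matrix (Fin m) (Fin m) ℂ) : Prop :=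
  A.PosSemidef ∧ A.trace = 1

/-- The set of bipartite separable states, the convex hull of Kronecker products of
density matrices. -/
noncomputable def SepStates (m n : ℕ) : Set (Matrix (Fin m × Fin n) (Fin m × Fin n) ℂ) :=
  convexHull ℝ {C | ∃ A B, IsDensityMatrix A ∧ IsDensityMatrix B ∧ C = A ⊗ₖ B}

set_option linter.unusedSectionVars false
set_option linter.unusedVariables false
set_option maxHeartbeats 1000000

namespace SepAux
variable {k : Type*} [Fintype k] [DecidableEq k]

def outer (x : k → ℂ) : Matrix k k ℂ := Matrix.vecMulVec x (star x)

lemma outer_apply (x : k → ℂ) (i j : k) : outer x i j = x i * star (x j) := rfl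

lemma outer_eq_mul (x : k → ℂ) : outer x = replicateCol Unit x * (replicateCol Unit x)ᴴ := by
  rw [conjTranspose_replicateCol, outer, vecMulVec_eq Unit]

lemma outer_posSemidef (x : k → ℂ) : (outer x).PosSemidef := by
  rw [outer_eq_mul]; exact posSemidef_self_mul_conjTranspose _

lemma outer_isHermitian (x : k → ℂ) : (outer x).IsHermitian := (outer_posSemidef x).isHermitian

lemma trace_outer (x : k → ℂ) : (outer x).trace = star x ⬝ᵥ x := by
  simp [Matrix.trace, Matrix.diag, outer_apply, dotProduct, mul_comm]

lemma outer_mulVec (x z : k → ℂ) : outer x *ᵥ z = (star x ⬝ᵥ z) • x := by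
  funext i
  simp only [mulVec, dotProduct, outer_apply, Pi.smul_apply, smul_eq_mul, Finset.sum_mul]
  congr 1; funext j
  simp [Pi.star_apply]; ring

lemma rank_outer {x : k → ℂ} (hx : x ≠ 0) : (outer x).rank = 1 := by
  have hle : (outer x).rank ≤ 1 := by
    rw [outer_eq_mul]
    calc ((replicateCol Unit x * (replicateCol Unit x)ᴴ)).rank ≤ (replicateCol Unit x).rank := rank_mul_le_left _ _
    _ ≤ Fintype.card Unit := rank_le_card_width _
    _ = 1 := by simp
  have hpos : 0 < (outer x).rank := by
    have hdot : star x ⬝ᵥ x ≠ 0 := by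
      rw [Ne, dotProduct_star_self_eq_zero]; exact hx
    have hmem : (star x ⬝ᵥ x) • x ∈ LinearMap.range (outer x).mulVecLin :=
      ⟨x, outer_mulVec x x⟩
    have hne : ((star x ⬝ᵥ x) • x : k → ℂ) ≠ 0 := smul_ne_zero hdot hx
    rw [Matrix.rank]
    rw [Module.finrank_pos_iff (R := ℂ)]
    exact ⟨⟨⟨_, hmem⟩, 0, fun h => hne (congrArg Subtype.val h)⟩⟩
  omega

lemma spectral_sum {A : Matrix k k ℂ} (hA : A.IsHermitian) :
    A = ∑ j, hA.eigenvalues j • outer (⇑(hA.eigenvectorBasis j)) := by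
  conv_lhs => rw [hA.spectral_theorem, Unitary.conjStarAlgAut_apply]
  ext i l
  rw [Matrix.mul_apply]
  simp only [Matrix.mul_diagonal, Function.comp_apply, Matrix.sum_apply, Matrix.smul_apply,
    outer_apply, Unitary.coe_star, star_eq_conjTranspose, conjTranspose_apply, IsHermitian.eigenvectorUnitary_apply]
  congr 1; funext j
  rw [RCLike.real_smul_eq_coe_mul]
  simp only [Pi.star_apply, RCLike.star_def]
  ring

lemma eigenvectorBasis_dot {A : Matrix k k ℂ} (hA : A.IsHermitian) (j : k) :
    star ⇑(hA.eigenvectorBasis j) ⬝ᵥ ⇑(hA.eigenvectorBasis j) = 1 := by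
  have := hA.eigenvectorBasis.orthonormal.1 j
  have h2 : (inner (𝕜 := ℂ) (hA.eigenvectorBasis j) (hA.eigenvectorBasis j)) = 1 := by
    rw [inner_self_eq_norm_sq_to_K, this]; norm_num
  rw [EuclideanSpace.inner_eq_star_dotProduct, dotProduct_comm] at h2; exact h2


lemma pure_iff_outer {A : Matrix k k ℂ} :
    (A.IsHermitian ∧ A.rank = 1 ∧ A.trace = 1) ↔
      ∃ x : k → ℂ, star x ⬝ᵥ x = 1 ∧ A = outer x := by
  constructor
  · rintro ⟨hA, hrank, htr⟩
    rw [hA.rank_eq_card_non_zero_eigs] at hrank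
    obtain ⟨a, ha⟩ := Fintype.card_eq_one_iff.mp hrank
    obtain ⟨i₀, hi₀⟩ := a
    have hunique : ∀ j, hA.eigenvalues j ≠ 0 → j = i₀ := fun j hj =>
      congrArg Subtype.val (ha ⟨j, hj⟩)
    have hsum : ∑ j, hA.eigenvalues j • outer (⇑(hA.eigenvectorBasis j))
        = hA.eigenvalues i₀ • outer (⇑(hA.eigenvectorBasis i₀)) := by
      refine Finset.sum_eq_single i₀ (fun j _ hj => ?_) (fun h => absurd (Finset.mem_univ i₀) h)
      have : hA.eigenvalues j = 0 := by
        by_contra h; exact hj (hunique j h)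
      rw [this, zero_smul]
    have hAeq : A = hA.eigenvalues i₀ • outer (⇑(hA.eigenvectorBasis i₀)) :=
      (spectral_sum hA).trans hsum
    have htr2 : (hA.eigenvalues i₀ • outer (⇑(hA.eigenvectorBasis i₀))).trace
        = (hA.eigenvalues i₀ : ℂ) := by
      rw [Matrix.trace_smul, trace_outer, eigenvectorBasis_dot hA]
      simp [Complex.real_smul]
    rw [← hAeq, htr] at htr2
    have h1 : hA.eigenvalues i₀ = 1 := by exact_mod_cast htr2.symm
    refine ⟨⇑(hA.eigenvectorBasis i₀), eigenvectorBasis_dot hA i₀, ?_⟩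
    rw [h1, one_smul] at hAeq
    exact hAeq
  · rintro ⟨x, hx, rfl⟩
    have hx0 : x ≠ 0 := by
      rintro rfl; simp at hx
    exact ⟨outer_isHermitian x, rank_outer hx0, by rw [trace_outer, hx]⟩

lemma density_decomp {A : Matrix k k ℂ} (hA : A.PosSemidef) (htr : A.trace = 1) :
    ∃ (t : k → ℝ) (P : k → Matrix k k ℂ), (∀ i, 0 ≤ t i) ∧ ∑ i, t i = 1 ∧
      (∀ i, (P i).IsHermitian ∧ (P i).rank = 1 ∧ (P i).trace = 1) ∧
      A = ∑ i, t i • P i := by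
  refine ⟨hA.1.eigenvalues, fun i => outer (⇑(hA.1.eigenvectorBasis i)),
    fun i => hA.eigenvalues_nonneg i, ?_, fun i => pure_iff_outer.mpr
      ⟨_, eigenvectorBasis_dot hA.1 i, rfl⟩, spectral_sum hA.1⟩
  have : A.trace = ∑ i, (hA.1.eigenvalues i : ℂ) := by
    conv_lhs => rw [spectral_sum hA.1]
    rw [Matrix.trace_sum]
    refine Finset.sum_congr rfl (fun i _ => ?_)
    rw [Matrix.trace_smul, trace_outer, eigenvectorBasis_dot hA.1]
    simp [Complex.real_smul]
  rw [htr] at this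
  have h2 : ((∑ i, hA.1.eigenvalues i : ℝ) : ℂ) = 1 := by push_cast; rw [← this]
  exact_mod_cast h2

lemma eq_of_extreme_combo {E : Type*} [AddCommGroup E] [Module ℝ E] {S : Set E}
    (hS : Convex ℝ S) {x : E} (hx : x ∈ S.extremePoints ℝ) {ι : Type*} [Fintype ι] [DecidableEq ι]
    {t : ι → ℝ} {f : ι → E} (ht0 : ∀ i, 0 ≤ t i) (ht1 : ∑ i, t i = 1)
    (hf : ∀ i, f i ∈ S) (hsum : ∑ i, t i • f i = x) {i : ι} (hti : 0 < t i) : f i = x := by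
  by_cases h1 : t i = 1
  · have hzero : ∀ j ∈ Finset.univ.erase i, t j = 0 := by
      have hsum' : ∑ j ∈ Finset.univ.erase i, t j = 0 := by
        have := Finset.add_sum_erase Finset.univ t (Finset.mem_univ i)
        rw [ht1, h1] at this; linarith
      intro j hj
      exact le_antisymm (by
        have := Finset.sum_le_sum (fun l (_ : l ∈ Finset.univ.erase i) => ht0 l)
        have h3 := Finset.single_le_sum (fun l (_ : l ∈ Finset.univ.erase i) => ht0 l) hj
        linarith) (ht0 j)
    rw [← hsum, ← Finset.add_sum_erase Finset.univ _ (Finset.mem_univ i), h1, one_smul,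
      Finset.sum_eq_zero (fun j hj => by rw [hzero j hj, zero_smul]), add_zero]
  · have hc : 0 < 1 - t i := by
      have hle : t i ≤ 1 := by
        rw [← ht1]
        exact Finset.single_le_sum (fun l _ => ht0 l) (Finset.mem_univ i)
      cases lt_or_eq_of_le hle with
      | inl h => linarith
      | inr h => exact absurd h h1
    set c := 1 - t i with hcdef
    set y : E := c⁻¹ • ∑ j ∈ Finset.univ.erase i, t j • f j with hy
    have hcsum : ∑ j ∈ Finset.univ.erase i, t j = c := by
      have := Finset.add_sum_erase Finset.univ t (Finset.mem_univ i)
      rw [ht1] at this; rw [hcdef]; linarith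
    have hyS : y ∈ S := by
      rw [hy, Finset.smul_sum]
      have := hS.sum_mem (t := Finset.univ.erase i) (w := fun j => c⁻¹ * t j)
        (z := f) (fun j _ => mul_nonneg (inv_nonneg.mpr hc.le) (ht0 j))
        (by rw [← Finset.mul_sum, hcsum, inv_mul_cancel₀ hc.ne']) (fun j _ => hf j)
      simpa [mul_smul] using this
    have hseg : x ∈ openSegment ℝ (f i) y := by
      refine ⟨t i, c, hti, hc, by rw [hcdef]; ring, ?_⟩
      rw [hy, smul_inv_smul₀ hc.ne', ← hsum,
        ← Finset.add_sum_erase Finset.univ _ (Finset.mem_univ i)]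
    exact hx.2 (hf i) hyS hseg


lemma smul_posSemidef {M : Matrix k k ℂ} (hM : M.PosSemidef) {a : ℝ} (ha : 0 ≤ a) :
    (a • M).PosSemidef := by
  refine posSemidef_iff_dotProduct_mulVec.mpr ⟨?_, ?_⟩
  · rw [IsHermitian, conjTranspose_smul]
    rw [hM.1.eq]
    congr 1
  · intro z
    rw [smul_mulVec, dotProduct_smul, Complex.real_smul]
    exact mul_nonneg (by exact_mod_cast ha) ((posSemidef_iff_dotProduct_mulVec.mp hM).2 z)

lemma sigma_eq_of_combo {x : k → ℂ} (hx : star x ⬝ᵥ x = 1) {σ τ : Matrix k k ℂ}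
    (hσ : σ.PosSemidef) (hσt : σ.trace = 1) (hτ : τ.PosSemidef)
    {a b : ℝ} (ha : 0 < a) (hb : 0 < b) (hab : a • σ + b • τ = outer x) : σ = outer x := by
  -- step 1
  have step1 : ∀ w : k → ℂ, star x ⬝ᵥ w = 0 → σ *ᵥ w = 0 := by
    intro w hw
    have h0 : star w ⬝ᵥ (outer x *ᵥ w) = 0 := by
      rw [outer_mulVec, hw, zero_smul, dotProduct_zero]
    have hexp : star w ⬝ᵥ (outer x *ᵥ w) =
        (a : ℂ) * (star w ⬝ᵥ (σ *ᵥ w)) + (b : ℂ) * (star w ⬝ᵥ (τ *ᵥ w)) := by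
      rw [← hab]
      rw [add_mulVec, dotProduct_add, smul_mulVec, smul_mulVec,
        dotProduct_smul, dotProduct_smul, Complex.real_smul, Complex.real_smul]
    have hs : (0:ℂ) ≤ star w ⬝ᵥ (σ *ᵥ w) := (posSemidef_iff_dotProduct_mulVec.mp hσ).2 w
    have ht : (0:ℂ) ≤ star w ⬝ᵥ (τ *ᵥ w) := (posSemidef_iff_dotProduct_mulVec.mp hτ).2 w
    have has : (0:ℂ) ≤ (a : ℂ) * (star w ⬝ᵥ (σ *ᵥ w)) :=
      mul_nonneg (by exact_mod_cast ha.le) hs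
    have hat : (0:ℂ) ≤ (b : ℂ) * (star w ⬝ᵥ (τ *ᵥ w)) :=
      mul_nonneg (by exact_mod_cast hb.le) ht
    have hzero : (a : ℂ) * (star w ⬝ᵥ (σ *ᵥ w)) = 0 := by
      have hsum0 : (a : ℂ) * (star w ⬝ᵥ (σ *ᵥ w)) + (b : ℂ) * (star w ⬝ᵥ (τ *ᵥ w)) = 0 := by
        rw [← hexp, h0]
      exact ((add_eq_zero_iff_of_nonneg has hat).mp hsum0).1
    have hdot0 : star w ⬝ᵥ (σ *ᵥ w) = 0 := by
      rcases mul_eq_zero.mp hzero with h | h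
      · exact absurd h (by exact_mod_cast ha.ne')
      · exact h
    exact (hσ.dotProduct_mulVec_zero_iff w).mp hdot0
  -- step 2
  set c : ℂ := star x ⬝ᵥ (σ *ᵥ x) with hc
  have step2 : σ *ᵥ x = c • x := by
    set w : k → ℂ := σ *ᵥ x - c • x with hwdef
    have hxw : star x ⬝ᵥ w = 0 := by
      rw [hwdef, dotProduct_sub, dotProduct_smul, hx, smul_eq_mul, mul_one, ← hc, sub_self]
    have hσw : σ *ᵥ w = 0 := step1 w hxw
    have hwu : star w ⬝ᵥ (σ *ᵥ x) = 0 := by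
      have h1 : star w ⬝ᵥ (σ *ᵥ x) = (star w ᵥ* σ) ⬝ᵥ x := (dotProduct_mulVec _ _ _)
      have h2 : star w ᵥ* σ = star (σ *ᵥ w) := by
        rw [star_mulVec, hσ.1.eq]
      rw [h1, h2, hσw]
      simp
    have hww : star w ⬝ᵥ w = 0 := by
      have hdecomp : σ *ᵥ x = w + c • x := by rw [hwdef]; abel
      have : star w ⬝ᵥ (w + c • x) = 0 := by rw [← hdecomp]; exact hwu
      rw [dotProduct_add, dotProduct_smul] at this
      have hwx : star w ⬝ᵥ x = 0 := by
        have := congrArg star hxw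
        rwa [star_dotProduct, star_star, star_zero] at this
      rw [hwx, smul_eq_mul, mul_zero, add_zero] at this
      exact this
    have hw0 : w = 0 := by
      rwa [dotProduct_star_self_eq_zero] at hww
    have := sub_eq_zero.mp (hwdef ▸ hw0)
    exact this
  -- step 3
  have step3 : ∀ z, σ *ᵥ z = ((star x ⬝ᵥ z) * c) • x := by
    intro z
    set w : k → ℂ := z - (star x ⬝ᵥ z) • x with hwdef
    have hxw : star x ⬝ᵥ w = 0 := by
      rw [hwdef, dotProduct_sub, dotProduct_smul, hx, smul_eq_mul, mul_one, sub_self]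
    have hσw : σ *ᵥ w = 0 := step1 w hxw
    have hz : z = w + (star x ⬝ᵥ z) • x := by rw [hwdef]; abel
    conv_lhs => rw [hz]
    rw [mulVec_add, hσw, zero_add, mulVec_smul, step2, smul_smul]
  have hmat : σ = c • outer x := by
    ext i j
    have h1 : σ *ᵥ Pi.single j 1 = ((star x ⬝ᵥ Pi.single j 1) * c) • x := step3 _
    have h2 : (σ *ᵥ Pi.single j 1) i = σ i j := by
      rw [mulVec_single]; simp
    have h3 : star x ⬝ᵥ Pi.single j 1 = star (x j) := by
      rw [dotProduct_single]; simp
    have := congrFun h1 i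
    rw [h2] at this
    rw [this, h3, Pi.smul_apply, smul_eq_mul, Matrix.smul_apply, outer_apply, smul_eq_mul]
    ring
  have hc1 : c = 1 := by
    have : σ.trace = c * (outer x).trace := by rw [hmat, Matrix.trace_smul, smul_eq_mul]
    rw [hσt, trace_outer, hx, mul_one] at this
    exact this.symm
  rw [hmat, hc1, one_smul]


lemma outer_mem_extremePoints {S : Set (Matrix k k ℂ)}
    (hmem : ∀ M ∈ S, M.PosSemidef ∧ M.trace = 1) {x : k → ℂ}
    (hx : star x ⬝ᵥ x = 1) (hxS : outer x ∈ S) : outer x ∈ S.extremePoints ℝ := by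
  refine ⟨hxS, fun σ hσ τ hτ hseg => ?_⟩
  obtain ⟨a, b, ha, hb, hab, hsum⟩ := hseg
  exact sigma_eq_of_combo hx (hmem σ hσ).1 (hmem σ hσ).2 (hmem τ hτ).1 ha hb hsum

variable {k' : Type*} [Fintype k'] [DecidableEq k']

variable {k' : Type*} [Fintype k'] [DecidableEq k']

lemma kron_outer (x : k → ℂ) (y : k' → ℂ) :
    outer x ⊗ₖ outer y = outer (fun p : k × k' => x p.1 * y p.2) := by
  ext ⟨i, j⟩ ⟨l, r⟩
  simp only [kroneckerMap_apply, outer_apply, star_mul']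
  ring

lemma dot_kron (x : k → ℂ) (y : k' → ℂ) :
    star (fun p : k × k' => x p.1 * y p.2) ⬝ᵥ (fun p : k × k' => x p.1 * y p.2)
      = (star x ⬝ᵥ x) * (star y ⬝ᵥ y) := by
  simp only [dotProduct, Pi.star_apply, Fintype.sum_prod_type, star_mul']
  rw [Finset.sum_mul_sum]
  exact Finset.sum_congr rfl fun a _ => Finset.sum_congr rfl fun b _ => by ring

lemma kron_conjTranspose (A : Matrix k k ℂ) (B : Matrix k' k' ℂ) :
    (A ⊗ₖ B)ᴴ = Aᴴ ⊗ₖ Bᴴ := by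
  ext ⟨i, j⟩ ⟨l, r⟩
  simp [conjTranspose_apply, kroneckerMap_apply, star_mul']

lemma kron_posSemidef {A : Matrix k k ℂ} {B : Matrix k' k' ℂ}
    (hA : A.PosSemidef) (hB : B.PosSemidef) : (A ⊗ₖ B).PosSemidef := by
  exact hA.kronecker hB

lemma kron_sum_smul {ι ι' : Type*} [Fintype ι] [Fintype ι']
    (t : ι → ℝ) (s : ι' → ℝ) (P : ι → Matrix k k ℂ) (Q : ι' → Matrix k' k' ℂ) :
    (∑ i, t i • P i) ⊗ₖ (∑ j, s j • Q j)
      = ∑ p : ι × ι', (t p.1 * s p.2) • (P p.1 ⊗ₖ Q p.2) := by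
  ext ⟨i, j⟩ ⟨l, r⟩
  rw [kroneckerMap_apply]
  simp only [Matrix.sum_apply, Matrix.smul_apply, Complex.real_smul]
  rw [Finset.sum_mul_sum, Fintype.sum_prod_type]
  refine Finset.sum_congr rfl (fun a _ => Finset.sum_congr rfl (fun b _ => ?_))
  rw [kroneckerMap_apply]
  push_cast
  ring


end SepAux

open SepAux in
/-- The set of separable states `S_{m,n}` is a convex subset of the real vector space of
Hermitian matrices, and its set of extreme points is exactly the set of pure product
states `{P ⊗ Q : P ∈ P_m, Q ∈ P_n}`. -/
theorem sep_states_convex_and_extremePoints (m n : ℕ) (hm : 1 ≤ m) (hn : 1 ≤ n) :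
    (∀ C ∈ SepStates m n, C.IsHermitian) ∧ Convex ℝ (SepStates m n) ∧
      Set.extremePoints ℝ (SepStates m n) =
        {C | ∃ P Q, IsPureState P ∧ IsPureState Q ∧ C = P ⊗ₖ Q} := by
  set G : Set (Matrix (Fin m × Fin n) (Fin m × Fin n) ℂ) :=
    {C | ∃ A B, IsDensityMatrix A ∧ IsDensityMatrix B ∧ C = A ⊗ₖ B} with hG
  set D : Set (Matrix (Fin m × Fin n) (Fin m × Fin n) ℂ) :=
    {M | M.PosSemidef ∧ M.trace = 1} with hD
  have hGD : G ⊆ D := by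
    rintro C ⟨A, B, hA, hB, rfl⟩
    refine ⟨kron_posSemidef hA.1 hB.1, ?_⟩
    rw [Matrix.trace_kronecker, hA.2, hB.2, one_mul]
  have hDconv : Convex ℝ D := by
    rintro σ ⟨hσ, hσt⟩ τ ⟨hτ, hτt⟩ a b ha hb hab
    refine ⟨Matrix.PosSemidef.add (smul_posSemidef hσ ha) (smul_posSemidef hτ hb), ?_⟩
    rw [Matrix.trace_add, Matrix.trace_smul, Matrix.trace_smul, hσt, hτt]
    simp [Complex.real_smul]
    exact_mod_cast congrArg (Complex.ofReal) hab
  have hSD : SepStates m n ⊆ D := convexHull_min hGD hDconv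
  have hconv : Convex ℝ (SepStates m n) := convex_convexHull ℝ _
  refine ⟨fun C hC => (hSD hC).1.isHermitian, hconv, ?_⟩
  ext C
  constructor
  · intro hC
    have hCG : C ∈ G := extremePoints_convexHull_subset hC
    obtain ⟨A, B, hA, hB, rfl⟩ := hCG
    obtain ⟨t, P, ht0, ht1, hPpure, hPdec⟩ := density_decomp hA.1 hA.2
    obtain ⟨s, Q, hs0, hs1, hQpure, hQdec⟩ := density_decomp hB.1 hB.2
    have hkron : A ⊗ₖ B = ∑ p : Fin m × Fin n, (t p.1 * s p.2) • (P p.1 ⊗ₖ Q p.2) := by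
      rw [hPdec, hQdec, kron_sum_smul]
    have hw0 : ∀ p : Fin m × Fin n, 0 ≤ t p.1 * s p.2 :=
      fun p => mul_nonneg (ht0 p.1) (hs0 p.2)
    have hw1 : ∑ p : Fin m × Fin n, t p.1 * s p.2 = 1 := by
      rw [Fintype.sum_prod_type, ← Finset.sum_mul_sum, ht1, hs1, one_mul]
    have hfmem : ∀ p : Fin m × Fin n, P p.1 ⊗ₖ Q p.2 ∈ SepStates m n := by
      intro p
      apply subset_convexHull
      refine ⟨P p.1, Q p.2, ⟨?_, (hPpure p.1).2.2⟩, ⟨?_, (hQpure p.2).2.2⟩, rfl⟩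
      · obtain ⟨x, hx, hPx⟩ := pure_iff_outer.mp (hPpure p.1)
        rw [hPx]; exact outer_posSemidef x
      · obtain ⟨y, hy, hQy⟩ := pure_iff_outer.mp (hQpure p.2)
        rw [hQy]; exact outer_posSemidef y
    have hexists : ∃ p : Fin m × Fin n, 0 < t p.1 * s p.2 := by
      by_contra h
      push_neg at h
      have : ∀ p : Fin m × Fin n, t p.1 * s p.2 = 0 :=
        fun p => le_antisymm (h p) (hw0 p)
      rw [Finset.sum_eq_zero (fun p _ => this p)] at hw1
      norm_num at hw1
    obtain ⟨p, hp⟩ := hexists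
    have := eq_of_extreme_combo hconv hC hw0 hw1 hfmem hkron.symm hp
    exact ⟨P p.1, Q p.2, hPpure p.1, hQpure p.2, this.symm⟩
  · rintro ⟨P, Q, hP, hQ, rfl⟩
    obtain ⟨x, hx, rfl⟩ := pure_iff_outer.mp hP
    obtain ⟨y, hy, rfl⟩ := pure_iff_outer.mp hQ
    rw [kron_outer]
    have hmemS : outer (fun p : Fin m × Fin n => x p.1 * y p.2) ∈ SepStates m n := by
      apply subset_convexHull
      refine ⟨outer x, outer y, ⟨outer_posSemidef x, ?_⟩, ⟨outer_posSemidef y, ?_⟩,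
        (kron_outer x y).symm⟩
      · rw [trace_outer, hx]
      · rw [trace_outer, hy]
    exact outer_mem_extremePoints (fun M hM => hSD hM)
      (by rw [dot_kron, hx, hy, one_mul]) hmemS
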